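/- For every m ≥ 1 the polynomials P(m,x) satisfy: (i) deg_x P(m,x) ≤ 2(m−1); (ii) P(m,x) = P(m,−x) as polynomials; (iii) for all positive integers m, n one has P(m,n) = P(n,m) + (−1)^{m+n−1}·(m−n), i.e. the function f(m,n) = P(m,n) + (−1)^{m+n}·m is symmetric on ℕ×ℕ. -/

import Mathlib

open Finset

/-- The polynomial `t(ν,μ,m;x) = ∏_{k=1}^{μ}(x+ν−μ+k) · ∏_{l=1}^{ν}(x−1−μ+l)` (independent of `m`). -/
noncomputable def tPoly (ν μ : ℕ) : Polynomial ℚ :=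
  (∏ k ∈ Finset.range μ, (Polynomial.X + Polynomial.C ((ν : ℚ) - (μ : ℚ) + (k : ℚ) + 1))) *
  (∏ l ∈ Finset.range ν, (Polynomial.X + Polynomial.C ((l : ℚ) - (μ : ℚ))))

/-- `P(m,x) = ∑_{ν,μ=0}^{m−1} t(ν,μ,m;x)·t(m−1−μ,m−1−ν,m;x)/(ν!(m−1−ν)!μ!(m−1−μ)!)`, with `P(0,x)=0`. -/
noncomputable def Ppoly (m : ℕ) : Polynomial ℚ :=
  ∑ ν ∈ Finset.range m, ∑ μ ∈ Finset.range m,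
    Polynomial.C (((ν.factorial : ℚ) * ((m - 1 - ν).factorial : ℚ) *
        (μ.factorial : ℚ) * ((m - 1 - μ).factorial : ℚ))⁻¹) *
      (tPoly ν μ * tPoly (m - 1 - μ) (m - 1 - ν))

/-- generalized binomial coefficient with integer top, rational valued -/
noncomputable def chN (t : ℤ) (k : ℕ) : ℚ := (∏ r ∈ range k, ((t : ℚ) - r)) / k.factorial

noncomputable def chZ (t k : ℤ) : ℚ := if 0 ≤ k then chN t k.toNat else 0

lemma chZ_ofNat (t : ℤ) (k : ℕ) : chZ t k = chN t k := by
  simp [chZ]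

lemma chZ_neg (t k : ℤ) (h : k < 0) : chZ t k = 0 := by
  simp [chZ, not_le.mpr h]

lemma chN_nat_cast (E k : ℕ) (hk : k ≤ E) : chN (E : ℤ) k = (E.choose k : ℚ) := by
  have hprod : (∏ r ∈ range k, ((E : ℚ) - r)) = (E.descFactorial k : ℚ) := by
    rw [Nat.descFactorial_eq_prod_range]
    push_cast
    refine Finset.prod_congr rfl ?_
    intro r hr
    have : r ≤ E := le_trans (le_of_lt (mem_range.mp hr)) hk
    push_cast [this]
    ring
  rw [chN]
  push_cast at hprod ⊢
  rw [hprod, Nat.descFactorial_eq_factorial_mul_choose]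
  push_cast
  rw [mul_comm]
  field_simp

lemma chN_nat_zero (E k : ℕ) (h : E < k) : chN (E : ℤ) k = 0 := by
  rw [chN]
  rw [Finset.prod_eq_zero (Finset.mem_range.mpr h) (by push_cast; ring)]
  simp

lemma chN_nat (E k : ℕ) : chN (E : ℤ) k = (E.choose k : ℚ) := by
  rcases le_or_gt k E with h | h
  · exact chN_nat_cast E k h
  · rw [chN_nat_zero E k h, Nat.choose_eq_zero_of_lt h]; simp

lemma chZ_compl (E : ℕ) (k : ℤ) : chZ (E : ℤ) k = chZ (E : ℤ) ((E : ℤ) - k) := by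
  rcases lt_or_ge k 0 with hk | hk
  · rw [chZ_neg _ _ hk]
    have h1 : (0:ℤ) ≤ (E:ℤ) - k := by omega
    rw [chZ, if_pos h1]
    have h2 : E < ((E:ℤ) - k).toNat := by omega
    rw [chN_nat]
    rw [Nat.choose_eq_zero_of_lt h2]
    simp
  · rcases le_or_gt k E with hE | hE
    · obtain ⟨k', rfl⟩ := Int.eq_ofNat_of_zero_le hk
      have hk' : k' ≤ E := by exact_mod_cast hE
      rw [chZ_ofNat, chZ, if_pos (by omega)]
      have : ((E:ℤ) - k').toNat = E - k' := by omega
      rw [this, chN_nat, chN_nat, Nat.choose_symm hk']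
    · rw [chZ, if_pos hk, chZ_neg _ _ (by omega), chN_nat,
        Nat.choose_eq_zero_of_lt (by omega)]
      simp

lemma chN_neg_one (k : ℕ) : chN (-1 : ℤ) k = (-1 : ℚ) ^ k := by
  rw [chN]
  have : (∏ r ∈ range k, (((-1:ℤ) : ℚ) - r)) = (-1)^k * (k.factorial : ℚ) := by
    rw [← Finset.prod_range_add_one_eq_factorial]
    push_cast
    rw [show ((-1:ℚ))^k = ∏ _r ∈ range k, (-1:ℚ) by simp, ← Finset.prod_mul_distrib]
    refine Finset.prod_congr rfl ?_
    intro r _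
    ring
  rw [this]
  field_simp

lemma chN_self (k : ℕ) : chN (k : ℤ) k = 1 := by
  rw [chN_nat, Nat.choose_self]; simp

lemma factorial_mul_chN (t : ℤ) (k : ℕ) :
    (k.factorial : ℚ) * chN t k = ∏ r ∈ range k, ((t : ℚ) - r) := by
  rw [chN]
  field_simp

lemma tP_eval (ν μ n : ℕ) :
    (tPoly ν μ).eval (n : ℚ) =
      ((μ.factorial : ℚ) * chN ((n : ℤ) + ν) μ) *
      ((ν.factorial : ℚ) * chN ((n : ℤ) + ν - μ - 1) ν) := by
  rw [tPoly, factorial_mul_chN, factorial_mul_chN]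
  simp only [Polynomial.eval_mul, Polynomial.eval_prod, Polynomial.eval_add,
    Polynomial.eval_X, Polynomial.eval_C]
  congr 1
  · rw [← Finset.prod_range_reflect (fun r => ((((n : ℤ) + ν : ℤ) : ℚ) - r)) μ]
    refine Finset.prod_congr rfl ?_
    intro k hk
    have hk' : k < μ := Finset.mem_range.mp hk
    have : ((μ - 1 - k : ℕ) : ℚ) = (μ : ℚ) - 1 - k := by
      have h1 : (1:ℕ) ≤ μ := by omega
      have h2 : k ≤ μ - 1 := by omega
      push_cast [Nat.cast_sub h2, Nat.cast_sub h1]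
      ring
    rw [this]
    push_cast
    ring
  · rw [← Finset.prod_range_reflect (fun r => ((((n : ℤ) + ν - μ - 1 : ℤ) : ℚ) - r)) ν]
    refine Finset.prod_congr rfl ?_
    intro l hl
    have hl' : l < ν := Finset.mem_range.mp hl
    have : ((ν - 1 - l : ℕ) : ℚ) = (ν : ℚ) - 1 - l := by
      have h1 : (1:ℕ) ≤ ν := by omega
      have h2 : l ≤ ν - 1 := by omega
      push_cast [Nat.cast_sub h2, Nat.cast_sub h1]
      ring
    rw [this]
    push_cast
    ring

lemma PP_eval (m n : ℕ) :
    (Ppoly m).eval (n : ℚ) =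
      ∑ ν ∈ range m, ∑ μ ∈ range m,
        chN ((n : ℤ) + ν) μ * chN ((n : ℤ) + ν - μ - 1) ν *
        (chN ((n : ℤ) + m - 1 - μ) (m - 1 - ν) * chN ((n : ℤ) + ν - μ - 1) (m - 1 - μ)) := by
  rw [Ppoly, Polynomial.eval_finset_sum]
  refine Finset.sum_congr rfl ?_
  intro ν hν
  rw [Polynomial.eval_finset_sum]
  refine Finset.sum_congr rfl ?_
  intro μ hμ
  have hν' : ν < m := Finset.mem_range.mp hν
  have hμ' : μ < m := Finset.mem_range.mp hμ
  rw [Polynomial.eval_mul, Polynomial.eval_C, Polynomial.eval_mul, tP_eval, tP_eval]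
  have e1 : ((n : ℤ) + (m - 1 - μ : ℕ)) = (n : ℤ) + m - 1 - μ := by
    have : (((m : ℤ)) - 1 - μ) = ((m - 1 - μ : ℕ) : ℤ) := by omega
    omega
  have e2 : ((n : ℤ) + (m - 1 - μ : ℕ) - (m - 1 - ν : ℕ) - 1) = (n : ℤ) + ν - μ - 1 := by
    have h1 : ((m - 1 - μ : ℕ) : ℤ) = (m : ℤ) - 1 - μ := by omega
    have h2 : ((m - 1 - ν : ℕ) : ℤ) = (m : ℤ) - 1 - ν := by omega
    omega
  rw [e2, e1]
  have f1 : (ν.factorial : ℚ) ≠ 0 := Nat.cast_ne_zero.mpr (Nat.factorial_ne_zero ν)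
  have f2 : (μ.factorial : ℚ) ≠ 0 := Nat.cast_ne_zero.mpr (Nat.factorial_ne_zero μ)
  have f3 : (((m - 1 - ν : ℕ)).factorial : ℚ) ≠ 0 := Nat.cast_ne_zero.mpr (Nat.factorial_ne_zero _)
  have f4 : (((m - 1 - μ : ℕ)).factorial : ℚ) ≠ 0 := Nat.cast_ne_zero.mpr (Nat.factorial_ne_zero _)
  field_simp

noncomputable def gg (s m i j : ℕ) : ℚ :=
  chN ((s : ℤ) - 1 - j) i * chN ((s : ℤ) - 1 - i) j *
    (chZ ((s : ℤ) - 2 - i - j) ((m : ℤ) - 1 - i) * chZ ((s : ℤ) - 2 - i - j) ((m : ℤ) - 1 - j))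

lemma PP_eval_sym (m n : ℕ) :
    (Ppoly m).eval (n : ℚ) = ∑ i ∈ range m, ∑ j ∈ range m, gg (m + n) m i j := by
  rw [PP_eval]
  rw [← Finset.sum_range_reflect (fun i => ∑ j ∈ range m, gg (m + n) m i j) m]
  refine Finset.sum_congr rfl ?_
  intro i hi
  have hi' : i < m := Finset.mem_range.mp hi
  refine Finset.sum_congr rfl ?_
  intro j hj
  have hj' : j < m := Finset.mem_range.mp hj
  rw [gg]
  have c1 : ((m - 1 - i : ℕ) : ℤ) = (m : ℤ) - 1 - i := by omega
  have e1 : ((m + n : ℕ) : ℤ) - 1 - ((m - 1 - i : ℕ) : ℤ) = (n : ℤ) + i := by omega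
  have e2 : ((m + n : ℕ) : ℤ) - 2 - ((m - 1 - i : ℕ) : ℤ) - j = (n : ℤ) + i - j - 1 := by omega
  have e3 : ((m + n : ℕ) : ℤ) - 1 - (j : ℤ) = (n : ℤ) + m - 1 - j := by push_cast; omega
  have e4 : (m : ℤ) - 1 - ((m - 1 - i : ℕ) : ℤ) = (i : ℤ) := by omega
  rw [e1, e2, e3, e4]
  have z1 : chZ ((n : ℤ) + i - j - 1) (i : ℤ) = chN ((n : ℤ) + i - j - 1) i :=
    chZ_ofNat _ i
  have z2 : chZ ((n : ℤ) + i - j - 1) ((m : ℤ) - 1 - j) =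
      chN ((n : ℤ) + i - j - 1) (m - 1 - j) := by
    rw [chZ, if_pos (by omega)]
    congr 1
    omega
  rw [z1, z2]
  ring

lemma chN_zero_of_lt (t : ℤ) (k : ℕ) (h0 : 0 ≤ t) (h : t < k) : chN t k = 0 := by
  obtain ⟨E, rfl⟩ := Int.eq_ofNat_of_zero_le h0
  exact chN_nat_zero E k (by exact_mod_cast h)

lemma chZ_negone (k : ℤ) : chZ (-1) k = if 0 ≤ k then (-1 : ℚ) ^ k.toNat else 0 := by
  rw [chZ]
  split_ifs with h
  · exact chN_neg_one k.toNat
  · rfl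

lemma neg_one_pow_par (a b : ℕ) (h : (a + b) % 2 = 0) : (-1 : ℚ) ^ a = (-1 : ℚ) ^ b := by
  rcases Nat.even_or_odd a with ha | ha
  · have hb : Even b := by rcases ha with ⟨c, hc⟩; exact ⟨b/2, by omega⟩
    rw [Even.neg_one_pow ha, Even.neg_one_pow hb]
  · have hb : Odd b := by rcases ha with ⟨c, hc⟩; exact ⟨b/2, by omega⟩
    rw [Odd.neg_one_pow ha, Odd.neg_one_pow hb]

lemma gg_vanish_high (s m i j : ℕ) (hi : i < s) (hj : j < s) (h : s ≤ i + j) :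
    gg s m i j = 0 := by
  rw [gg, chN_zero_of_lt ((s : ℤ) - 1 - j) i (by omega) (by omega)]
  ring

lemma gg_compl (m n i j : ℕ) (h : (i : ℤ) + j ≤ (m : ℤ) + n - 2) :
    gg (m + n) m i j = gg (m + n) n j i := by
  have hE : (0 : ℤ) ≤ ((m + n : ℕ) : ℤ) - 2 - i - j := by push_cast; omega
  obtain ⟨E, hEe⟩ := Int.eq_ofNat_of_zero_le hE
  rw [gg, gg, hEe]
  rw [show chZ (E : ℤ) ((m : ℤ) - 1 - i) = chZ (E : ℤ) ((n : ℤ) - 1 - j) by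
    rw [chZ_compl E ((m : ℤ) - 1 - i)]
    congr 1
    push_cast at hEe ⊢
    omega]
  rw [show chZ (E : ℤ) ((m : ℤ) - 1 - j) = chZ (E : ℤ) ((n : ℤ) - 1 - i) by
    rw [chZ_compl E ((m : ℤ) - 1 - j)]
    congr 1
    push_cast at hEe ⊢
    omega]
  have : ((m + n : ℕ) : ℤ) - 2 - (j : ℤ) - (i : ℤ) = (E : ℤ) := by
    rw [← hEe]; ring
  rw [this]
  ring

lemma gg_line (s m i : ℕ) (hi : i < s) (hm : 1 ≤ m) (hms : m ≤ s) :
    gg s m i (s - 1 - i) =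
      if s - m ≤ i ∧ i < m then (-1 : ℚ) ^ (s - 1) else 0 := by
  have hj : ((s - 1 - i : ℕ) : ℤ) = (s : ℤ) - 1 - i := by omega
  rw [gg, hj]
  have t1 : (s : ℤ) - 1 - ((s : ℤ) - 1 - i) = (i : ℤ) := by ring
  have t2 : (s : ℤ) - 2 - (i : ℤ) - ((s : ℤ) - 1 - i) = -1 := by ring
  rw [t1, t2, chN_self]
  have harr : (m : ℤ) - 1 - ((s : ℤ) - 1 - (i : ℤ)) = (m : ℤ) + i - s := by ring
  rw [harr, ← hj, chN_self, chZ_negone, chZ_negone]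
  by_cases hc : s - m ≤ i ∧ i < m
  · rw [if_pos hc, if_pos (show (0:ℤ) ≤ (m:ℤ) - 1 - i by omega),
        if_pos (show (0:ℤ) ≤ (m:ℤ) + i - s by omega)]
    have e1 : ((m : ℤ) - 1 - i).toNat = m - 1 - i := by omega
    have e2 : ((m : ℤ) + i - s).toNat = m + i - s := by omega
    rw [e1, e2, one_mul, one_mul, ← pow_add]
    exact neg_one_pow_par _ _ (by omega)
  · rw [if_neg hc]
    have : ¬ (0:ℤ) ≤ (m:ℤ) - 1 - i ∨ ¬ (0:ℤ) ≤ (m:ℤ) + i - s := by omega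
    rcases this with h | h
    · rw [if_neg h]; ring
    · rw [if_neg h]; ring

lemma gg_zero_out (s m i j : ℕ) (h : m ≤ i ∨ m ≤ j) : gg s m i j = 0 := by
  rcases h with h | h
  · rw [gg, chZ_neg ((s : ℤ) - 2 - i - j) ((m : ℤ) - 1 - i) (by omega)]
    ring
  · rw [gg, chZ_neg ((s : ℤ) - 2 - i - j) ((m : ℤ) - 1 - j) (by omega)]
    ring

lemma PP_eval_ext (a b s : ℕ) (hab : a + b = s) :
    (Ppoly a).eval (b : ℚ) = ∑ i ∈ range s, ∑ j ∈ range s, gg s a i j := by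
  rw [PP_eval_sym, hab]
  have has : a ≤ s := by omega
  have h1 : ∀ i : ℕ, ∑ j ∈ range a, gg s a i j = ∑ j ∈ range s, gg s a i j := by
    intro i
    refine Finset.sum_subset (Finset.range_subset_range.mpr has) ?_
    intro j _ hj
    exact gg_zero_out s a i j (Or.inr (by simpa using hj))
  calc ∑ i ∈ range a, ∑ j ∈ range a, gg s a i j
      = ∑ i ∈ range a, ∑ j ∈ range s, gg s a i j := by
        exact Finset.sum_congr rfl fun i _ => h1 i
    _ = ∑ i ∈ range s, ∑ j ∈ range s, gg s a i j := by
        refine Finset.sum_subset (Finset.range_subset_range.mpr has) ?_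
        intro i _ hi
        exact Finset.sum_eq_zero fun j _ =>
          gg_zero_out s a i j (Or.inl (by simpa using hi))

lemma line_sum (s m : ℕ) (hm : 1 ≤ m) (hms : m ≤ s) :
    ∑ i ∈ range s, gg s m i (s - 1 - i) =
      (-1 : ℚ) ^ (s - 1) * ((m - (s - m) : ℕ) : ℚ) := by
  have : ∀ i ∈ range s, gg s m i (s - 1 - i) =
      if i ∈ Finset.Ico (s - m) m then (-1 : ℚ) ^ (s - 1) else 0 := by
    intro i hi
    rw [gg_line s m i (Finset.mem_range.mp hi) hm hms]
    simp [Finset.mem_Ico]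
  rw [Finset.sum_congr rfl this, Finset.sum_ite_mem,
    Finset.inter_eq_right.mpr (by
      intro x hx
      simp only [Finset.mem_Ico] at hx
      exact Finset.mem_range.mpr (by omega)),
    Finset.sum_const, Nat.card_Ico]
  simp [mul_comm]

lemma key3 (m n : ℕ) (hm : 1 ≤ m) (hn : 1 ≤ n) :
    (Ppoly m).eval (n : ℚ) = (Ppoly n).eval (m : ℚ) + (-1 : ℚ) ^ (m + n - 1) * ((m : ℚ) - n) := by
  set s := m + n with hs
  have h1 : (Ppoly m).eval (n : ℚ) = ∑ i ∈ range s, ∑ j ∈ range s, gg s m i j :=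
    PP_eval_ext m n s rfl
  have h2 : (Ppoly n).eval (m : ℚ) = ∑ i ∈ range s, ∑ j ∈ range s, gg s n i j :=
    PP_eval_ext n m s (by omega)
  have hsw : ∑ i ∈ range s, ∑ j ∈ range s, gg s n i j
      = ∑ i ∈ range s, ∑ j ∈ range s, gg s n j i := Finset.sum_comm
  have main : ∑ i ∈ range s, ∑ j ∈ range s, (gg s m i j - gg s n j i)
      = (-1 : ℚ) ^ (s - 1) * ((m : ℚ) - n) := by
    have hrow : ∀ i ∈ range s,
        ∑ j ∈ range s, (gg s m i j - gg s n j i)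
          = gg s m i (s - 1 - i) - gg s n (s - 1 - i) i := by
      intro i hi
      have hi' : i < s := Finset.mem_range.mp hi
      refine Finset.sum_eq_single_of_mem (s - 1 - i) (Finset.mem_range.mpr (by omega)) ?_
      intro j hj hne
      have hj' : j < s := Finset.mem_range.mp hj
      rcases lt_or_ge (i + j) (s - 1) with hlt | hge
      · have : gg s m i j = gg s n j i := by
          rw [hs]
          exact gg_compl m n i j (by push_cast; omega)
        rw [this, sub_self]
      · have hgt : s ≤ i + j := by omega
        rw [gg_vanish_high s m i j hi' hj' hgt, gg_vanish_high s n j i hj' hi' (by omega),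
          sub_self]
    rw [Finset.sum_congr rfl hrow, Finset.sum_sub_distrib]
    have hrefl : ∑ i ∈ range s, gg s n (s - 1 - i) i
        = ∑ i ∈ range s, gg s n i (s - 1 - i) := by
      rw [← Finset.sum_range_reflect (fun i => gg s n i (s - 1 - i)) s]
      refine Finset.sum_congr rfl ?_
      intro i hi
      have hi' : i < s := Finset.mem_range.mp hi
      congr 1
      omega
    rw [hrefl, line_sum s m hm (by omega), line_sum s n hn (by omega)]
    have hc : ((m - (s - m) : ℕ) : ℤ) - ((n - (s - n) : ℕ) : ℤ) = (m : ℤ) - n := by omega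
    have hc' : ((m - (s - m) : ℕ) : ℚ) - ((n - (s - n) : ℕ) : ℚ) = (m : ℚ) - n := by
      exact_mod_cast congrArg (fun z : ℤ => (z : ℚ)) hc
    rw [← mul_sub, hc']
  rw [h1, h2, hsw]
  rw [← sub_eq_iff_eq_add']
  rw [← main, ← Finset.sum_sub_distrib]
  exact Finset.sum_congr rfl fun i _ => (Finset.sum_sub_distrib _ _).symm

open Polynomial in
lemma deg_tP (ν μ : ℕ) : (tPoly ν μ).natDegree ≤ μ + ν := by
  rw [tPoly]
  refine le_trans (Polynomial.natDegree_mul_le) (add_le_add ?_ ?_)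
  · refine le_trans (Polynomial.natDegree_prod_le _ _) (le_of_eq ?_)
    rw [Finset.sum_congr rfl (fun k _ => Polynomial.natDegree_X_add_C _)]
    simp
  · refine le_trans (Polynomial.natDegree_prod_le _ _) (le_of_eq ?_)
    rw [Finset.sum_congr rfl (fun l _ => Polynomial.natDegree_X_add_C _)]
    simp

lemma deg_PP (m : ℕ) : (Ppoly m).natDegree ≤ 2 * (m - 1) := by
  rw [Ppoly]
  refine Polynomial.natDegree_sum_le_of_forall_le _ _ ?_
  intro ν hν
  refine Polynomial.natDegree_sum_le_of_forall_le _ _ ?_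
  intro μ hμ
  have hν' : ν < m := Finset.mem_range.mp hν
  have hμ' : μ < m := Finset.mem_range.mp hμ
  refine le_trans (Polynomial.natDegree_C_mul_le _ _) ?_
  refine le_trans (Polynomial.natDegree_mul_le) ?_
  have d1 := deg_tP ν μ
  have d2 := deg_tP (m - 1 - μ) (m - 1 - ν)
  omega

open Polynomial in
lemma tP_comp (ν μ : ℕ) :
    (tPoly ν μ).comp (-X) = (-1 : ℚ[X]) ^ (ν + μ) * tPoly μ ν := by
  rw [tPoly, Polynomial.mul_comp, Polynomial.prod_comp, Polynomial.prod_comp]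
  have hA : (∏ k ∈ range μ, (X + C ((ν : ℚ) - μ + k + 1)).comp (-X))
      = (-1 : ℚ[X]) ^ μ * ∏ l ∈ range μ, (X + C ((l : ℚ) - ν)) := by
    have step : ∀ k ∈ range μ, (X + C ((ν : ℚ) - μ + k + 1)).comp (-X)
        = (-1 : ℚ[X]) * (X + C (((μ : ℚ) - 1 - k) - ν)) := by
      intro k _
      rw [Polynomial.add_comp, Polynomial.X_comp, Polynomial.C_comp]
      rw [show ((μ : ℚ) - 1 - k) - ν = -((ν : ℚ) - μ + k + 1) by ring, map_neg]
      ring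
    rw [Finset.prod_congr rfl step, Finset.prod_mul_distrib, Finset.prod_const,
      Finset.card_range]
    congr 1
    rw [← Finset.prod_range_reflect (fun l => X + C ((l : ℚ) - ν)) μ]
    refine Finset.prod_congr rfl ?_
    intro k hk
    have hk' : k < μ := Finset.mem_range.mp hk
    have : ((μ - 1 - k : ℕ) : ℚ) = (μ : ℚ) - 1 - k := by
      have h2 : ((μ - 1 - k : ℕ) : ℤ) = (μ : ℤ) - 1 - k := by omega
      exact_mod_cast congrArg (fun z : ℤ => (z : ℚ)) h2
    rw [this]
  have hB : (∏ l ∈ range ν, (X + C ((l : ℚ) - μ)).comp (-X))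
      = (-1 : ℚ[X]) ^ ν * ∏ k ∈ range ν, (X + C ((μ : ℚ) - ν + k + 1)) := by
    have step : ∀ l ∈ range ν, (X + C ((l : ℚ) - μ)).comp (-X)
        = (-1 : ℚ[X]) * (X + C ((μ : ℚ) - ν + ((ν : ℚ) - 1 - l) + 1)) := by
      intro l _
      rw [Polynomial.add_comp, Polynomial.X_comp, Polynomial.C_comp]
      rw [show (μ : ℚ) - ν + ((ν : ℚ) - 1 - l) + 1 = -((l : ℚ) - μ) by ring, map_neg]
      ring
    rw [Finset.prod_congr rfl step, Finset.prod_mul_distrib, Finset.prod_const,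
      Finset.card_range]
    congr 1
    rw [← Finset.prod_range_reflect (fun k => X + C ((μ : ℚ) - ν + k + 1)) ν]
    refine Finset.prod_congr rfl ?_
    intro l hl
    have hl' : l < ν := Finset.mem_range.mp hl
    have : ((ν - 1 - l : ℕ) : ℚ) = (ν : ℚ) - 1 - l := by
      have h2 : ((ν - 1 - l : ℕ) : ℤ) = (ν : ℤ) - 1 - l := by omega
      exact_mod_cast congrArg (fun z : ℤ => (z : ℚ)) h2
    rw [this]
  rw [hA, hB, tPoly, pow_add]
  ring

open Polynomial in
lemma PP_comp (m : ℕ) : (Ppoly m).comp (-X) = Ppoly m := by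
  rw [Ppoly, Polynomial.sum_comp]
  rw [Finset.sum_congr rfl (fun ν _ => Polynomial.sum_comp _ _ _)]
  rw [Finset.sum_comm]
  refine Finset.sum_congr rfl ?_
  intro μ hμ
  refine Finset.sum_congr rfl ?_
  intro ν hν
  have hν' : ν < m := Finset.mem_range.mp hν
  have hμ' : μ < m := Finset.mem_range.mp hμ
  rw [Polynomial.mul_comp, Polynomial.C_comp, Polynomial.mul_comp, tP_comp, tP_comp]
  have hpow : (-1 : ℚ[X]) ^ (ν + μ) * (-1 : ℚ[X]) ^ ((m - 1 - μ) + (m - 1 - ν)) = 1 := by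
    rw [← pow_add]
    have : (ν + μ) + ((m - 1 - μ) + (m - 1 - ν)) = 2 * (m - 1) := by omega
    rw [this, pow_mul]
    norm_num
  have hfac : (((ν.factorial : ℚ) * ((m - 1 - ν).factorial : ℚ) *
        (μ.factorial : ℚ) * ((m - 1 - μ).factorial : ℚ))⁻¹)
      = (((μ.factorial : ℚ) * ((m - 1 - μ).factorial : ℚ) *
        (ν.factorial : ℚ) * ((m - 1 - ν).factorial : ℚ))⁻¹) := by
    ring_nf
  calc Polynomial.C (((ν.factorial : ℚ) * ((m - 1 - ν).factorial : ℚ) *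
        (μ.factorial : ℚ) * ((m - 1 - μ).factorial : ℚ))⁻¹) *
      ((-1 : ℚ[X]) ^ (ν + μ) * tPoly μ ν *
        ((-1 : ℚ[X]) ^ ((m - 1 - μ) + (m - 1 - ν)) * tPoly (m - 1 - ν) (m - 1 - μ)))
      = Polynomial.C (((ν.factorial : ℚ) * ((m - 1 - ν).factorial : ℚ) *
        (μ.factorial : ℚ) * ((m - 1 - μ).factorial : ℚ))⁻¹) *
        (((-1 : ℚ[X]) ^ (ν + μ) * (-1 : ℚ[X]) ^ ((m - 1 - μ) + (m - 1 - ν))) *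
          (tPoly μ ν * tPoly (m - 1 - ν) (m - 1 - μ))) := by ring
    _ = _ := by rw [hpow, hfac]; ring

/-- For `m ≥ 1`: (i) `deg P(m,x) ≤ 2(m−1)`; (ii) `P(m,x) = P(m,−x)`;
(iii) `P(m,n) = P(n,m) + (−1)^{m+n−1}(m−n)` for all positive integers `m, n`. -/
theorem stmt1 :
    ∀ m : ℕ, 1 ≤ m →
      (Ppoly m).natDegree ≤ 2 * (m - 1) ∧
      (Ppoly m).comp (-Polynomial.X) = Ppoly m ∧
      (∀ n : ℕ, 1 ≤ n →
        (Ppoly m).eval (n : ℚ) =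
          (Ppoly n).eval (m : ℚ) + (-1 : ℚ) ^ (m + n - 1) * ((m : ℚ) - (n : ℚ))) := by
  intro m hm
  exact ⟨deg_PP m, PP_comp m, fun n hn => key3 m n hm hn⟩
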